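/- Let ρ and σ be density operators on a finite-dimensional Hilbert space with (1/2)‖ρ − σ‖₁ = ε. Then there exist density operators ρ′ and σ′ such that (1 − ε′)ρ + ε′ρ′ = (1 − ε′)σ + ε′σ′, where ε′ = ε/(1 + ε). -/

import Mathlib

open Matrix BigOperators ComplexOrder

variable {n : Type*} [Fintype n] [DecidableEq n]

/-- The positive semidefinite square root of a positive semidefinite matrix
(as defined in Mathlib of December 2024, since removed). -/
noncomputable def Matrix.PosSemidef.sqrt {m : Type*} {𝕜 : Type*} [Fintype m] [DecidableEq m]
    [RCLike 𝕜] {A : Matrix m m 𝕜} (hA : A.PosSemidef) : Matrix m m 𝕜 :=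
  hA.1.eigenvectorUnitary.1 * diagonal ((↑) ∘ Real.sqrt ∘ hA.1.eigenvalues) *
    (star hA.1.eigenvectorUnitary : Matrix m m 𝕜)

/-- Trace norm (Schatten 1-norm) of a matrix. -/
noncomputable def traceNorm (A : Matrix n n ℂ) : ℝ :=
  ((Matrix.posSemidef_conjTranspose_mul_self A).sqrt.trace).re

/-- A density operator: positive semidefinite with trace 1. -/
def IsDensity (ρ : Matrix n n ℂ) : Prop := ρ.PosSemidef ∧ ρ.trace = 1

theorem sqrt_conjTranspose_mul_self_eq_abs_aux (A : Matrix n n ℂ) (hA : A.IsHermitian) :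
    (Matrix.posSemidef_conjTranspose_mul_self A).sqrt =
      (IsHermitian.eigenvectorUnitary hA : Matrix n n ℂ) * diagonal (fun i => (((fun x : ℝ => |x|) (hA.eigenvalues i) : ℂ))) * star (IsHermitian.eigenvectorUnitary hA : Matrix n n ℂ) := by
  have h1 : (Matrix.posSemidef_conjTranspose_mul_self A).sqrt = cfc Real.sqrt (Aᴴ * A) := by
    rw [(Matrix.posSemidef_conjTranspose_mul_self A).1.cfc_eq]
    rfl
  have h2 : (IsHermitian.eigenvectorUnitary hA : Matrix n n ℂ) * diagonal (fun i => (((fun x : ℝ => |x|) (hA.eigenvalues i) : ℂ))) * star (IsHermitian.eigenvectorUnitary hA : Matrix n n ℂ) = cfc (fun x : ℝ => |x|) A := by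
    rw [hA.cfc_eq]
    rfl
  have h3 : Aᴴ * A = cfc (fun x : ℝ => x * x) A := by
    rw [hA.eq, cfc_mul (fun x : ℝ => x) (fun x : ℝ => x) A, cfc_id' ℝ A]
  rw [h1, h2, h3, ← cfc_comp' Real.sqrt (fun x : ℝ => x * x) A]
  congr 1
  funext x
  exact Real.sqrt_mul_self_eq_abs x

set_option maxHeartbeats 1000000 in
theorem mixing_decomposition (ρ σ : Matrix n n ℂ) (hρ : IsDensity ρ) (hσ : IsDensity σ)
    (ε : ℝ) (hε : (1 / 2) * traceNorm (ρ - σ) = ε) :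
    ∃ ρ' σ' : Matrix n n ℂ, IsDensity ρ' ∧ IsDensity σ' ∧
      (1 - ε / (1 + ε)) • ρ + (ε / (1 + ε)) • ρ' =
      (1 - ε / (1 + ε)) • σ + (ε / (1 + ε)) • σ' := by
  set A : Matrix n n ℂ := ρ - σ with hAdef
  have hA : A.IsHermitian := hρ.1.1.sub hσ.1.1
  set U : Matrix n n ℂ := (IsHermitian.eigenvectorUnitary hA : Matrix n n ℂ) with hUdef
  set ev : n → ℝ := hA.eigenvalues with hevdef
  set F : (ℝ → ℝ) → Matrix n n ℂ :=
    fun f => U * diagonal (fun i => ((f (ev i) : ℂ))) * star U with hFdef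
  have hUU : star U * U = 1 := by
    rw [hUdef]; exact Matrix.UnitaryGroup.star_mul_self _
  -- A equals F id
  have hFA : F (fun x => x) = A := by
    simp only [hFdef]
    conv_rhs => rw [hA.spectral_theorem]
    rw [hUdef, hevdef]
    congr 1
  -- positivity
  have hFpsd : ∀ f : ℝ → ℝ, (∀ i, 0 ≤ f (ev i)) → (F f).PosSemidef := by
    intro f hf
    have hD : (diagonal (fun i => ((f (ev i) : ℂ)))).PosSemidef := by
      refine posSemidef_diagonal_iff.mpr fun i => ?_
      exact_mod_cast hf i
    simpa only [hFdef, Matrix.star_eq_conjTranspose] using hD.mul_mul_conjTranspose_same U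
  -- trace
  have hFtrace : ∀ f : ℝ → ℝ, (F f).trace = ((∑ i, f (ev i) : ℝ) : ℂ) := by
    intro f
    simp only [hFdef]
    rw [Matrix.trace_mul_cycle, hUU, Matrix.one_mul, Matrix.trace_diagonal]
    push_cast
    rfl
  -- subtraction
  have hFsub : ∀ f g : ℝ → ℝ, F f - F g = F (fun x => f x - g x) := by
    intro f g
    have hd : (diagonal (fun i => ((f (ev i) - g (ev i) : ℝ) : ℂ)) : Matrix n n ℂ)
        = diagonal (fun i => ((f (ev i) : ℝ) : ℂ)) - diagonal (fun i => ((g (ev i) : ℝ) : ℂ)) := by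
      have h5 : (fun i => ((f (ev i) - g (ev i) : ℝ) : ℂ))
          = fun i => ((f (ev i) : ℝ) : ℂ) - ((g (ev i) : ℝ) : ℂ) := by
        funext i; push_cast; ring
      rw [h5, Matrix.diagonal_sub]
    simp only [hFdef]
    rw [hd, Matrix.mul_sub, Matrix.sub_mul]
  -- multiplication
  have hFmul : ∀ f g : ℝ → ℝ, F f * F g = F (fun x => f x * g x) := by
    intro f g
    have hd : (diagonal (fun i => ((f (ev i) * g (ev i) : ℝ) : ℂ)) : Matrix n n ℂ)
        = diagonal (fun i => ((f (ev i) : ℝ) : ℂ)) * diagonal (fun i => ((g (ev i) : ℝ) : ℂ)) := by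
      rw [Matrix.diagonal_mul_diagonal]
      funext i; push_cast; ring
    simp only [hFdef]
    rw [hd]
    simp only [Matrix.mul_assoc]
    rw [← Matrix.mul_assoc (star U) U, hUU, Matrix.one_mul]
  -- real smul
  have hFsmul : ∀ (c : ℝ) (f : ℝ → ℝ), c • F f = F (fun x => c * f x) := by
    intro c f
    have hd : (diagonal (fun i => ((c * f (ev i) : ℝ) : ℂ)) : Matrix n n ℂ)
        = c • diagonal (fun i => ((f (ev i) : ℝ) : ℂ)) := by
      have h5 : (fun i => ((c * f (ev i) : ℝ) : ℂ)) = c • fun i => ((f (ev i) : ℝ) : ℂ) := by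
        funext i
        simp [Complex.real_smul]
      rw [h5, Matrix.diagonal_smul]
    simp only [hFdef]
    rw [hd, mul_smul_comm, smul_mul_assoc]
  -- sqrt of AᴴA is F abs
  have habs2 : (fun x : ℝ => |x| * |x|) = fun x : ℝ => x * x :=
    funext fun x => abs_mul_abs_self x
  have hsq : F (fun x => |x|) ^ 2 = Aᴴ * A := by
    calc F (fun x => |x|) ^ 2 = F (fun x => |x| * |x|) := by
          rw [pow_two]; exact hFmul (fun x => |x|) (fun x => |x|)
      _ = F (fun x => x * x) := by rw [habs2]
      _ = F (fun x => x) * F (fun x => x) := (hFmul (fun x => x) (fun x => x)).symm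
      _ = A * A := by rw [hFA]
      _ = Aᴴ * A := by rw [hA.eq]
  have hsqrt : (Matrix.posSemidef_conjTranspose_mul_self A).sqrt = F (fun x => |x|) :=
    sqrt_conjTranspose_mul_self_eq_abs_aux A hA
  -- trace norm value
  have htn : traceNorm A = ∑ i, |ev i| := by
    rw [traceNorm, hsqrt, hFtrace, Complex.ofReal_re]
  -- trace A = 0
  have htrA : ∑ i, ev i = 0 := by
    have h0 : A.trace = 0 := by
      rw [hAdef, Matrix.trace_sub, hρ.2, hσ.2, sub_self]
    have h0' := hFtrace (fun x => x)
    rw [hFA, h0] at h0'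
    exact_mod_cast h0'.symm
  have hsum : ∑ i, |ev i| = 2 * ε := by
    rw [← hε, htn]; ring
  have hεnn : 0 ≤ ε := by
    have h2 : (0:ℝ) ≤ ∑ i, |ev i| := Finset.sum_nonneg fun i _ => abs_nonneg _
    rw [hsum] at h2; linarith
  rcases eq_or_lt_of_le hεnn with hε0 | hεpos
  · -- ε = 0 : ρ = σ
    have hev0 : ∀ i, ev i = 0 := by
      intro i
      have h3 := (Finset.sum_eq_zero_iff_of_nonneg
        (fun i (_ : i ∈ Finset.univ) => abs_nonneg (ev i))).mp
        (by rw [hsum, ← hε0]; ring)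
      exact abs_eq_zero.mp (h3 i (Finset.mem_univ i))
    have hA0 : A = 0 := by
      rw [← hFA]
      simp only [hFdef]
      have hd : (diagonal (fun i => ((ev i : ℂ))) : Matrix n n ℂ) = 0 := by
        ext i j
        rcases eq_or_ne i j with rfl | h
        · simp [hev0]
        · simp [diagonal_apply_ne _ h]
      rw [hd, Matrix.mul_zero, Matrix.zero_mul]
    have hρσ : ρ = σ := sub_eq_zero.mp hA0
    exact ⟨ρ, ρ, hρ, hρ, by rw [hρσ]⟩
  · -- ε > 0
    have h1ε : (0:ℝ) < 1 + ε := by linarith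
    have hmax : ∀ x : ℝ, max x 0 = (x + |x|) / 2 := by
      intro x
      rcases le_total 0 x with h | h
      · rw [max_eq_left h, abs_of_nonneg h]; ring
      · rw [max_eq_right h, abs_of_nonpos h]; ring
    set f : ℝ → ℝ := fun x => max x 0 / ε with hfd
    set g : ℝ → ℝ := fun x => max (-x) 0 / ε with hgd
    have hsumf : ∑ i, f (ev i) = 1 := by
      simp only [hfd]
      rw [← Finset.sum_div]
      have h4 : ∑ i, max (ev i) 0 = ε := by
        simp_rw [hmax]
        rw [← Finset.sum_div, Finset.sum_add_distrib, htrA, hsum]; ring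
      rw [h4, div_self hεpos.ne']
    have hsumg : ∑ i, g (ev i) = 1 := by
      simp only [hgd]
      rw [← Finset.sum_div]
      have h4 : ∑ i, max (-ev i) 0 = ε := by
        simp_rw [hmax, abs_neg]
        rw [← Finset.sum_div, Finset.sum_add_distrib, Finset.sum_neg_distrib, htrA, hsum]
        ring
      rw [h4, div_self hεpos.ne']
    refine ⟨F g, F f,
      ⟨hFpsd g (fun i => div_nonneg (le_max_right _ _) hεnn),
        by rw [hFtrace g, hsumg]; norm_num⟩,
      ⟨hFpsd f (fun i => div_nonneg (le_max_right _ _) hεnn),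
        by rw [hFtrace f, hsumf]; norm_num⟩,
      ?_⟩
    have hfun : (fun x : ℝ => (1 - ε / (1 + ε)) * x) = fun x => (ε / (1 + ε)) * (f x - g x) := by
      funext x
      have hms : f x - g x = x / ε := by
        simp only [hfd, hgd]
        rw [div_sub_div_same]
        congr 1
        rcases le_total 0 x with h | h
        · rw [max_eq_left h, max_eq_right (by linarith), sub_zero]
        · rw [max_eq_right h, max_eq_left (by linarith)]; ring
      rw [hms]
      field_simp
      ring
    have hkey : (1 - ε / (1 + ε)) • A = (ε / (1 + ε)) • (F f - F g) := by
      calc (1 - ε / (1 + ε)) • A = (1 - ε / (1 + ε)) • F (fun x => x) := by rw [hFA]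
        _ = F (fun x => (1 - ε / (1 + ε)) * x) := hFsmul (1 - ε / (1 + ε)) (fun x => x)
        _ = F (fun x => (ε / (1 + ε)) * (f x - g x)) := by rw [hfun]
        _ = (ε / (1 + ε)) • F (fun x => f x - g x) := (hFsmul (ε / (1 + ε)) (fun x => f x - g x)).symm
        _ = (ε / (1 + ε)) • (F f - F g) := by rw [hFsub f g]
    rw [hAdef, smul_sub, smul_sub, sub_eq_sub_iff_add_eq_add] at hkey
    exact hkey.trans (add_comm _ _)
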